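/- Downward Löwenheim–Skolem for split signatures: Let Σ be split by Λ into {Σ_λ}, let 𝔸 be a Σ-structure, and for each λ let κ_λ be a cardinal with max(ℵ₀, |Σ_λ|) ≤ κ_λ ≤ min{|σ^𝔸| : σ ∈ λ, σ^𝔸 infinite}, together with sets A_σ ⊆ σ^𝔸 of size ≤ κ_λ for each infinite σ ∈ λ. Then there is an elementary substructure 𝔹 of 𝔸 with |σ^𝔹| = κ_λ and A_σ ⊆ σ^𝔹 for each infinite-sorted σ ∈ λ, and σ^𝔹 = σ^𝔸 for each sort with σ^𝔸 finite. -/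

import Mathlib

set_option autoImplicit false

/-- A many-sorted first-order signature. -/
structure MSSignature : Type 1 where
  Sorts : Type
  Func : Type
  Pred : Type
  funcDom : Func → List Sorts
  funcCod : Func → Sorts
  predDom : Pred → List Sorts

namespace MS

variable (Sg : MSSignature)

/-- Many-sorted terms; variables of each sort are indexed by naturals. -/
inductive Term : Sg.Sorts → Type where
  | var (s : Sg.Sorts) (n : ℕ) : Term s
  | app (f : Sg.Func)
      (args : ∀ i : Fin (Sg.funcDom f).length, Term ((Sg.funcDom f).get i)) :
      Term (Sg.funcCod f)

/-- Many-sorted first-order formulas. -/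
inductive Formula : Type where
  | eq {s : Sg.Sorts} (t u : Term Sg s) : Formula
  | pred (P : Sg.Pred)
      (args : ∀ i : Fin (Sg.predDom P).length, Term Sg ((Sg.predDom P).get i)) : Formula
  | falsum : Formula
  | imp (φ ψ : Formula) : Formula
  | all (s : Sg.Sorts) (n : ℕ) (φ : Formula) : Formula

/-- A structure for a many-sorted signature: each sort gets a nonempty domain. -/
structure Structure : Type 1 where
  dom : Sg.Sorts → Type
  dom_nonempty : ∀ s, Nonempty (dom s)
  interpFunc : ∀ f : Sg.Func,
    (∀ i : Fin (Sg.funcDom f).length, dom ((Sg.funcDom f).get i)) → dom (Sg.funcCod f)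
  interpPred : ∀ P : Sg.Pred,
    (∀ i : Fin (Sg.predDom P).length, dom ((Sg.predDom P).get i)) → Prop

variable {Sg}

/-- Variable assignments. -/
def Assign (A : Structure Sg) : Type := ∀ s : Sg.Sorts, ℕ → A.dom s

open Classical in
noncomputable
def Assign.update {A : Structure Sg} (ν : Assign A) (s : Sg.Sorts) (n : ℕ) (a : A.dom s) :
    Assign A := fun t m =>
  if h : s = t then (if m = n then h ▸ a else ν t m) else ν t m

def Term.eval {A : Structure Sg} (ν : Assign A) : ∀ {s : Sg.Sorts}, Term Sg s → A.dom s
  | _, .var s n => ν s n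
  | _, .app f args => A.interpFunc f fun i => Term.eval ν (args i)

/-- Tarskian satisfaction. -/
def Sat (A : Structure Sg) (ν : Assign A) : Formula Sg → Prop
  | .eq t u => t.eval ν = u.eval ν
  | .pred P args => A.interpPred P fun i => (args i).eval ν
  | .falsum => False
  | .imp φ ψ => Sat A ν φ → Sat A ν ψ
  | .all s n φ => ∀ a : A.dom s, Sat A (ν.update s n a) φ

/-- Derived connectives. -/
def Formula.not (φ : Formula Sg) : Formula Sg := .imp φ .falsum
def Formula.and (φ ψ : Formula Sg) : Formula Sg := (Formula.imp φ ψ.not).not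
def Formula.or (φ ψ : Formula Sg) : Formula Sg := .imp φ.not ψ
def Formula.ex (s : Sg.Sorts) (n : ℕ) (φ : Formula Sg) : Formula Sg :=
  ((Formula.all s n φ.not)).not
def Formula.andList : List (Formula Sg) → Formula Sg :=
  List.foldr Formula.and (Formula.not .falsum)
def Formula.orList : List (Formula Sg) → Formula Sg :=
  List.foldr Formula.or .falsum

/-- Occurrence of variable `(s, n)` in a term. -/
def Term.varOccurs (s : Sg.Sorts) (n : ℕ) : ∀ {t : Sg.Sorts}, Term Sg t → Prop
  | _, .var s' n' => s = s' ∧ n = n'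
  | _, .app _ args => ∃ i, Term.varOccurs s n (args i)

/-- Free occurrence of variable `(s, n)` in a formula. -/
def Formula.varFree (s : Sg.Sorts) (n : ℕ) : Formula Sg → Prop
  | .eq t u => t.varOccurs s n ∨ u.varOccurs s n
  | .pred _ args => ∃ i, (args i).varOccurs s n
  | .falsum => False
  | .imp φ ψ => φ.varFree s n ∨ ψ.varFree s n
  | .all s' n' φ => φ.varFree s n ∧ ¬(s = s' ∧ n = n')

def Formula.IsSentence (φ : Formula Sg) : Prop := ∀ s n, ¬ φ.varFree s n

/-- Quantifier-free formulas. -/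
def Formula.IsQF : Formula Sg → Prop
  | .eq _ _ => True
  | .pred _ _ => True
  | .falsum => True
  | .imp φ ψ => φ.IsQF ∧ ψ.IsQF
  | .all _ _ _ => False

/-- A structure is a model of a set of formulas (a theory) if it satisfies
every axiom under every assignment. -/
def Models (A : Structure Sg) (T : Set (Formula Sg)) : Prop :=
  ∀ φ ∈ T, ∀ ν : Assign A, Sat A ν φ

/-- Elementary equivalence: same sentences hold. -/
def ElemEquiv (A B : Structure Sg) : Prop :=
  ∀ φ : Formula Sg, φ.IsSentence →
    ((∀ ν : Assign A, Sat A ν φ) ↔ (∀ ν : Assign B, Sat B ν φ))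

/-- Substructures: sort-wise subsets closed under the functions. -/
structure Substructure (A : Structure Sg) : Type 1 where
  carrier : ∀ s : Sg.Sorts, Set (A.dom s)
  carrier_nonempty : ∀ s, (carrier s).Nonempty
  closed : ∀ (f : Sg.Func)
    (args : ∀ i : Fin (Sg.funcDom f).length, A.dom ((Sg.funcDom f).get i)),
    (∀ i, args i ∈ carrier _) → A.interpFunc f args ∈ carrier _

/-- The induced structure on a substructure. -/
def Substructure.toStructure {A : Structure Sg} (B : Substructure A) : Structure Sg where
  dom s := ↥(B.carrier s)
  dom_nonempty s := ⟨⟨(B.carrier_nonempty s).choose, (B.carrier_nonempty s).choose_spec⟩⟩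
  interpFunc f args :=
    ⟨A.interpFunc f fun i => (args i).1, B.closed f _ fun i => (args i).2⟩
  interpPred P args := A.interpPred P fun i => (args i).1

/-- View an assignment into a substructure as an assignment into the ambient structure. -/
def Substructure.amb {A : Structure Sg} (B : Substructure A)
    (ν : Assign B.toStructure) : Assign A := fun s n => (ν s n).1

/-- `B` is an elementary substructure of `A`. -/
def Substructure.IsElementary {A : Structure Sg} (B : Substructure A) : Prop :=
  ∀ (φ : Formula Sg) (ν : Assign B.toStructure),
    Sat B.toStructure ν φ ↔ Sat A (B.amb ν) φ

/-- Isomorphisms of structures. -/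
structure Iso (A B : Structure Sg) : Type 1 where
  toEquiv : ∀ s, A.dom s ≃ B.dom s
  map_func : ∀ (f : Sg.Func) args,
    toEquiv _ (A.interpFunc f args) = B.interpFunc f (fun i => toEquiv _ (args i))
  map_pred : ∀ (P : Sg.Pred) args,
    A.interpPred P args ↔ B.interpPred P (fun i => toEquiv _ (args i))

end MS

/-- The cardinality of a signature: sorts + function symbols + predicate symbols. -/
noncomputable def MSSignature.card (Sg : MSSignature) : Cardinal :=
  Cardinal.mk Sg.Sorts + Cardinal.mk Sg.Func + Cardinal.mk Sg.Pred

/-- A countable signature. -/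
def MSSignature.IsCountable (Sg : MSSignature) : Prop :=
  Countable Sg.Sorts ∧ Countable Sg.Func ∧ Countable Sg.Pred

namespace MS

variable {Sg : MSSignature}

/-- A splitting of a signature by a partition `Λ` of its sorts: every function and
predicate symbol uses sorts from a single part only. -/
structure Split (Sg : MSSignature) (Λ : Type) where
  sortPart : Sg.Sorts → Λ
  funcPart : Sg.Func → Λ
  predPart : Sg.Pred → Λ
  func_dom : ∀ (f : Sg.Func) (i : Fin (Sg.funcDom f).length),
    sortPart ((Sg.funcDom f).get i) = funcPart f
  func_cod : ∀ f : Sg.Func, sortPart (Sg.funcCod f) = funcPart f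
  pred_dom : ∀ (P : Sg.Pred) (i : Fin (Sg.predDom P).length),
    sortPart ((Sg.predDom P).get i) = predPart P

/-- A term lies in the sub-signature `Σ_l`. -/
def Term.inPart {Λ : Type} (sp : Split Sg Λ) (l : Λ) :
    ∀ {s : Sg.Sorts}, Term Sg s → Prop
  | s, .var _ _ => sp.sortPart s = l
  | _, .app f args => sp.funcPart f = l ∧ ∀ i, Term.inPart sp l (args i)

/-- A formula lies in the sub-signature `Σ_l`: all its symbols and the sorts of all
its variables belong to the part `l`. -/
def Formula.inPart {Λ : Type} (sp : Split Sg Λ) (l : Λ) : Formula Sg → Prop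
  | .eq (s := s) t u => sp.sortPart s = l ∧ t.inPart sp l ∧ u.inPart sp l
  | .pred P args => sp.predPart P = l ∧ ∀ i, (args i).inPart sp l
  | .falsum => True
  | .imp φ ψ => φ.inPart sp l ∧ ψ.inPart sp l
  | .all s _ φ => sp.sortPart s = l ∧ φ.inPart sp l

/-- A generalized `Λ`-cube: a conjunction of formulas, each over a single
sub-signature, with pairwise distinct parts. -/
def Formula.IsGenCube {Λ : Type} (sp : Split Sg Λ) (φ : Formula Sg) : Prop :=
  ∃ L : List (Λ × Formula Sg), (L.map Prod.fst).Nodup ∧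
    (∀ p ∈ L, (p.2).inPart sp p.1) ∧ φ = Formula.andList (L.map Prod.snd)

/-- A generalized `Λ`-clause: a disjunction of formulas, each over a single
sub-signature, with pairwise distinct parts. -/
def Formula.IsGenClause {Λ : Type} (sp : Split Sg Λ) (φ : Formula Sg) : Prop :=
  ∃ L : List (Λ × Formula Sg), (L.map Prod.fst).Nodup ∧
    (∀ p ∈ L, (p.2).inPart sp p.1) ∧ φ = Formula.orList (L.map Prod.snd)

/-- Generalized disjunctive normal form: a disjunction of generalized cubes. -/
def Formula.IsGDNF {Λ : Type} (sp : Split Sg Λ) (φ : Formula Sg) : Prop :=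
  ∃ L : List (Formula Sg), (∀ ψ ∈ L, ψ.IsGenCube sp) ∧ φ = Formula.orList L

/-- Generalized conjunctive normal form: a conjunction of generalized clauses. -/
def Formula.IsGCNF {Λ : Type} (sp : Split Sg Λ) (φ : Formula Sg) : Prop :=
  ∃ L : List (Formula Sg), (∀ ψ ∈ L, ψ.IsGenClause sp) ∧ φ = Formula.andList L

/-- Logical equivalence of many-sorted formulas. -/
def LogEquiv (φ ψ : Formula Sg) : Prop :=
  ∀ (A : Structure Sg) (ν : Assign A), Sat A ν φ ↔ Sat A ν ψ

/-- The cardinality of the sub-signature `Σ_l` determined by a splitting. -/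
noncomputable def Split.partCard {Λ : Type} (sp : Split Sg Λ) (l : Λ) : Cardinal :=
  Cardinal.mk {s : Sg.Sorts // sp.sortPart s = l} +
    Cardinal.mk {f : Sg.Func // sp.funcPart f = l} +
    Cardinal.mk {P : Sg.Pred // sp.predPart P = l}

end MS

open MS Cardinal

namespace MS

open Classical

variable {Sg : MSSignature} {Λ : Type}

section Basics

variable {A : Structure Sg}

lemma Assign.update_self (ν : Assign A) (s : Sg.Sorts) (n : ℕ) (a : A.dom s) :
    ν.update s n a s n = a := by
  simp [Assign.update]

lemma Assign.update_of_ne (ν : Assign A) {s : Sg.Sorts} {n : ℕ} (a : A.dom s)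
    {t : Sg.Sorts} {m : ℕ} (h : ¬(s = t ∧ n = m)) :
    ν.update s n a t m = ν t m := by
  unfold Assign.update
  split
  · rename_i hst
    subst hst
    have : ¬ m = n := fun hh => h ⟨rfl, hh.symm⟩
    simp [this]
  · rfl

lemma Term.eval_congr {ν ν' : Assign A} :
    ∀ {s : Sg.Sorts} (t : Term Sg s), (∀ u k, t.varOccurs u k → ν u k = ν' u k) →
      t.eval ν = t.eval ν'
  | _, .var s n, h => h s n ⟨rfl, rfl⟩
  | _, .app f args, h => by
    show A.interpFunc f _ = A.interpFunc f _
    congr 1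
    funext i
    exact Term.eval_congr (args i) (fun u k hk => h u k ⟨i, hk⟩)

lemma Sat_congr : ∀ (φ : Formula Sg) {ν ν' : Assign A},
    (∀ u k, φ.varFree u k → ν u k = ν' u k) → (Sat A ν φ ↔ Sat A ν' φ)
  | .eq t u, ν, ν', h => by
    show t.eval ν = u.eval ν ↔ t.eval ν' = u.eval ν'
    rw [Term.eval_congr t (fun a b hb => h a b (Or.inl hb)),
      Term.eval_congr u (fun a b hb => h a b (Or.inr hb))]
  | .pred P args, ν, ν', h => by
    show A.interpPred P _ ↔ A.interpPred P _
    have : (fun i => (args i).eval ν) = fun i => (args i).eval ν' := by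
      funext i
      exact Term.eval_congr (args i) (fun a b hb => h a b ⟨i, hb⟩)
    rw [this]
  | .falsum, ν, ν', h => Iff.rfl
  | .imp φ ψ, ν, ν', h => by
    have h1 := Sat_congr φ (ν := ν) (ν' := ν') (fun a b hb => h a b (Or.inl hb))
    have h2 := Sat_congr ψ (ν := ν) (ν' := ν') (fun a b hb => h a b (Or.inr hb))
    show (_ → _) ↔ (_ → _)
    rw [h1, h2]
  | .all s n φ, ν, ν', h => by
    show (∀ a, Sat A (ν.update s n a) φ) ↔ (∀ a, Sat A (ν'.update s n a) φ)
    refine forall_congr' fun a => Sat_congr φ fun u k hk => ?_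
    by_cases hc : s = u ∧ n = k
    · obtain ⟨rfl, rfl⟩ := hc
      rw [Assign.update_self, Assign.update_self]
    · rw [Assign.update_of_ne _ _ hc, Assign.update_of_ne _ _ hc]
      exact h u k ⟨hk, fun hh => hc ⟨hh.1.symm, hh.2.symm⟩⟩

/-- Satisfaction of derived connectives. -/
lemma Sat_not (ν : Assign A) (φ : Formula Sg) : Sat A ν φ.not ↔ ¬ Sat A ν φ := by
  show (Sat A ν φ → False) ↔ _; rfl

lemma Sat_andList (ν : Assign A) : ∀ L : List (Formula Sg),
    (Sat A ν (Formula.andList L) ↔ ∀ φ ∈ L, Sat A ν φ)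
  | [] => by
    show ((Sat A ν .falsum → False) ↔ _)
    simp [Sat]
  | φ :: L => by
    show Sat A ν (Formula.and φ (Formula.andList L)) ↔ _
    have := Sat_andList ν L
    show ((Sat A ν φ → (Sat A ν (Formula.andList L) → False)) → False) ↔ _
    rw [this]
    simp only [List.mem_cons]
    constructor
    · intro h
      by_contra hc
      push_neg at hc
      apply h
      intro h1 h2
      obtain ⟨ψ, hψ1, hψ2⟩ := hc
      rcases hψ1 with rfl | hm
      · exact hψ2 h1
      · exact hψ2 (h2 ψ hm)
    · intro h hc
      exact hc (h φ (Or.inl rfl)) fun ψ hψ => h ψ (Or.inr hψ)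

lemma Sat_orList (ν : Assign A) : ∀ L : List (Formula Sg),
    (Sat A ν (Formula.orList L) ↔ ∃ φ ∈ L, Sat A ν φ)
  | [] => by
    show Sat A ν .falsum ↔ _
    simp [Sat]
  | φ :: L => by
    show Sat A ν (Formula.or φ (Formula.orList L)) ↔ _
    have := Sat_orList ν L
    show (((Sat A ν φ → False)) → Sat A ν (Formula.orList L)) ↔ _
    rw [this]
    simp only [List.mem_cons]
    constructor
    · intro h
      by_cases hφ : Sat A ν φ
      · exact ⟨φ, Or.inl rfl, hφ⟩
      · rcases h hφ with ⟨ψ, h1, h2⟩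
        exact ⟨ψ, Or.inr h1, h2⟩
    · rintro ⟨ψ, (rfl | hm), h2⟩
      · exact fun hc => absurd h2 hc
      · exact fun _ => ⟨ψ, hm, h2⟩

end Basics

section Part

variable (sp : Split Sg Λ) {l : Λ}

lemma Term.inPart_of_sortPart : ∀ {s : Sg.Sorts} (t : Term Sg s), sp.sortPart s = l →
    t.inPart sp l
  | _, .var s n, h => h
  | _, .app f args, h => by
    have hf : sp.funcPart f = l := by rw [← sp.func_cod f]; exact h
    exact ⟨hf, fun i => Term.inPart_of_sortPart (args i) (by rw [sp.func_dom f i, hf])⟩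

lemma Term.sortPart_of_inPart : ∀ {s : Sg.Sorts} (t : Term Sg s), t.inPart sp l →
    sp.sortPart s = l
  | _, .var s n, h => h
  | _, .app f args, h => by rw [sp.func_cod f]; exact h.1

lemma Term.sortPart_of_varOccurs : ∀ {s : Sg.Sorts} (t : Term Sg s), t.inPart sp l →
    ∀ {u k}, t.varOccurs u k → sp.sortPart u = l
  | _, .var s n, h, u, k, ho => by obtain ⟨rfl, rfl⟩ := ho; exact h
  | _, .app f args, h, u, k, ho => by
    obtain ⟨i, hi⟩ := ho
    exact Term.sortPart_of_varOccurs (args i) (h.2 i) hi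

lemma Formula.sortPart_of_varFree : ∀ (φ : Formula Sg), φ.inPart sp l →
    ∀ {u k}, φ.varFree u k → sp.sortPart u = l
  | .eq t v, h, u, k, hf => by
    rcases hf with hf | hf
    · exact Term.sortPart_of_varOccurs sp t h.2.1 hf
    · exact Term.sortPart_of_varOccurs sp v h.2.2 hf
  | .pred P args, h, u, k, hf => by
    obtain ⟨i, hi⟩ := hf
    exact Term.sortPart_of_varOccurs sp (args i) (h.2 i) hi
  | .imp φ ψ, h, u, k, hf => by
    rcases hf with hf | hf
    · exact Formula.sortPart_of_varFree φ h.1 hf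
    · exact Formula.sortPart_of_varFree ψ h.2 hf
  | .all s n φ, h, u, k, hf => Formula.sortPart_of_varFree φ h.2 hf.1

lemma Formula.inPart_not {φ : Formula Sg} (h : φ.inPart sp l) : (φ.not).inPart sp l :=
  ⟨h, trivial⟩

lemma Formula.inPart_andList : ∀ {L : List (Formula Sg)}, (∀ φ ∈ L, φ.inPart sp l) →
    (Formula.andList L).inPart sp l
  | [], _ => ⟨trivial, trivial⟩
  | φ :: L, h =>
    ⟨⟨h φ (List.mem_cons_self),
      Formula.inPart_andList (fun ψ hψ => h ψ (List.mem_cons_of_mem φ hψ)), trivial⟩, trivial⟩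

lemma Formula.inPart_orList : ∀ {L : List (Formula Sg)}, (∀ φ ∈ L, φ.inPart sp l) →
    (Formula.orList L).inPart sp l
  | [], _ => trivial
  | φ :: L, h =>
    ⟨⟨h φ (List.mem_cons_self), trivial⟩,
      Formula.inPart_orList (fun ψ hψ => h ψ (List.mem_cons_of_mem φ hψ))⟩

end Part

section Free

variable {A : Structure Sg}

/-- The set of free variables of a formula. -/
def Formula.freeSet (φ : Formula Sg) : Set (Sg.Sorts × ℕ) := {p | φ.varFree p.1 p.2}

def Term.occSet {s : Sg.Sorts} (t : Term Sg s) : Set (Sg.Sorts × ℕ) :=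
  {p | t.varOccurs p.1 p.2}

lemma Term.finite_occSet : ∀ {s : Sg.Sorts} (t : Term Sg s), t.occSet.Finite
  | _, .var s n => Set.Finite.subset (Set.finite_singleton (s, n)) (by
      rintro ⟨u, k⟩ ⟨rfl, rfl⟩; rfl)
  | _, .app f args => by
    have : (Term.app f args).occSet = ⋃ i, (args i).occSet := by
      ext p; simp [Term.occSet, Term.varOccurs, Set.mem_iUnion]
    rw [this]
    exact Set.finite_iUnion fun i => Term.finite_occSet (args i)

lemma Formula.finite_freeSet : ∀ (φ : Formula Sg), φ.freeSet.Finite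
  | .eq t u => by
    have : (Formula.eq t u).freeSet = t.occSet ∪ u.occSet := rfl
    rw [this]; exact (t.finite_occSet).union (u.finite_occSet)
  | .pred P args => by
    have : (Formula.pred P args).freeSet = ⋃ i, (args i).occSet := by
      ext p; simp [Formula.freeSet, Formula.varFree, Term.occSet, Set.mem_iUnion]
    rw [this]
    exact Set.finite_iUnion fun i => (args i).finite_occSet
  | .falsum => by
    have : (Formula.falsum (Sg := Sg)).freeSet = ∅ := by
      ext p; simp [Formula.freeSet, Formula.varFree]
    rw [this]; exact Set.finite_empty
  | .imp φ ψ => by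
    have : (Formula.imp φ ψ).freeSet = φ.freeSet ∪ ψ.freeSet := rfl
    rw [this]; exact (Formula.finite_freeSet φ).union (Formula.finite_freeSet ψ)
  | .all s n φ => by
    refine Set.Finite.subset (Formula.finite_freeSet φ) ?_
    rintro ⟨u, k⟩ hk
    exact hk.1

end Free

end MS
namespace MS

variable {Sg : MSSignature} {Λ : Type}

section NF

lemma sat_update_of_ne_part {A : Structure Sg} (sp : Split Sg Λ) {l' : Λ} {φ : Formula Sg}
    (h : φ.inPart sp l') {s : Sg.Sorts} (hs : sp.sortPart s ≠ l') (ν : Assign A) (m : ℕ)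
    (a : A.dom s) : Sat A (ν.update s m a) φ ↔ Sat A ν φ :=
  Sat_congr φ (fun u k hk => Assign.update_of_ne ν a
    (fun hc => hs (hc.1 ▸ Formula.sortPart_of_varFree sp φ h hk)))

/-- Any boolean function of formulas in part `l` is realized by a formula in part `l`. -/
lemma exists_bc {ι : Type} [Fintype ι] (sp : Split Sg Λ) (l : Λ) (θ : ι → Formula Sg)
    (hθ : ∀ i, (θ i).inPart sp l) (G : (ι → Prop) → Prop) :
    ∃ χ : Formula Sg, χ.inPart sp l ∧
      ∀ (A : Structure Sg) (ν : Assign A), Sat A ν χ ↔ G (fun i => Sat A ν (θ i)) := by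
  classical
  set cube : (ι → Bool) → Formula Sg :=
    fun w => Formula.andList (Finset.univ.toList.map fun i => if w i then θ i else (θ i).not)
    with hcube
  refine ⟨Formula.orList ((Finset.univ.toList (α := ι → Bool)).map fun w =>
      if G (fun i => w i = true) then cube w else .falsum), ?_, ?_⟩
  · apply Formula.inPart_orList
    intro φ hφ
    rcases List.mem_map.1 hφ with ⟨w, _, rfl⟩
    split
    · apply Formula.inPart_andList
      intro ψ hψ
      rcases List.mem_map.1 hψ with ⟨i, _, rfl⟩
      split
      · exact hθ i
      · exact Formula.inPart_not sp (hθ i)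
    · trivial
  · intro A ν
    rw [Sat_orList]
    constructor
    · rintro ⟨φ, hφ, hsat⟩
      rcases List.mem_map.1 hφ with ⟨w, _, rfl⟩
      by_cases hG : G (fun i => w i = true)
      · rw [if_pos hG, hcube, Sat_andList] at hsat
        have : (fun i => Sat A ν (θ i)) = (fun i => w i = true) := by
          funext i
          apply propext
          have := hsat (if w i then θ i else (θ i).not)
            (List.mem_map.2 ⟨i, by simp, rfl⟩)
          by_cases hw : w i = true
          · rw [if_pos hw] at this
            simp [this, hw]
          · rw [if_neg hw, Sat_not] at this
            simp only [Bool.not_eq_true] at hw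
            simp [this, hw]
        rw [this]
        exact hG
      · rw [if_neg hG] at hsat
        exact absurd hsat (by simp [Sat])
    · intro hG
      refine ⟨_, List.mem_map.2 ⟨fun i => decide (Sat A ν (θ i)), by simp, rfl⟩, ?_⟩
      have hrw : (fun i => decide (Sat A ν (θ i)) = true) = (fun i => Sat A ν (θ i)) := by
        funext i; simp
      rw [if_pos (by rw [hrw]; exact hG), hcube, Sat_andList]
      intro ψ hψ
      rcases List.mem_map.1 hψ with ⟨i, _, rfl⟩
      by_cases hs : Sat A ν (θ i)
      · rw [if_pos (by simp [hs])]
        exact hs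
      · rw [if_neg (by simp [hs]), Sat_not]
        exact hs

/-- Semantic normal form: every formula is a boolean function of formulas each lying
in a single part. -/
theorem normal_form (sp : Split Sg Λ) (A : Structure Sg) (φ : Formula Sg) :
    ∃ (ι : Type) (_ : Fintype ι) (θ : ι → Formula Sg) (pt : ι → Λ)
      (F : (ι → Prop) → Prop),
      (∀ i, (θ i).inPart sp (pt i)) ∧
      ∀ ν : Assign A, Sat A ν φ ↔ F (fun i => Sat A ν (θ i)) := by
  induction φ with
  | @eq s t u =>
    exact ⟨Unit, inferInstance, fun _ => .eq t u, fun _ => sp.sortPart s, fun g => g ⟨⟩,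
      fun _ => ⟨rfl, Term.inPart_of_sortPart sp t rfl, Term.inPart_of_sortPart sp u rfl⟩,
      fun ν => Iff.rfl⟩
  | pred P args =>
    exact ⟨Unit, inferInstance, fun _ => .pred P args, fun _ => sp.predPart P, fun g => g ⟨⟩,
      fun _ => ⟨rfl, fun i => Term.inPart_of_sortPart sp (args i) (sp.pred_dom P i)⟩,
      fun ν => Iff.rfl⟩
  | falsum =>
    exact ⟨Empty, inferInstance, Empty.elim, Empty.elim, fun _ => False,
      fun i => i.elim, fun ν => Iff.rfl⟩
  | imp φ ψ ih1 ih2 =>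
    obtain ⟨ι₁, f1, θ₁, pt₁, F₁, h₁, hF₁⟩ := ih1
    obtain ⟨ι₂, f2, θ₂, pt₂, F₂, h₂, hF₂⟩ := ih2
    refine ⟨ι₁ ⊕ ι₂, @instFintypeSum ι₁ ι₂ f1 f2, Sum.elim θ₁ θ₂, Sum.elim pt₁ pt₂,
      fun g => F₁ (fun i => g (.inl i)) → F₂ (fun i => g (.inr i)), ?_, ?_⟩
    · rintro (i | i)
      · exact h₁ i
      · exact h₂ i
    · intro ν
      show (Sat A ν φ → Sat A ν ψ) ↔ _
      rw [hF₁ ν, hF₂ ν]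
      exact Iff.rfl
  | all s m ψ ih =>
    classical
    obtain ⟨ι, fι, θ, pt, F, hpt, hF⟩ := ih
    let Io := {i : ι // pt i ≠ sp.sortPart s}
    let Il := {i : ι // pt i = sp.sortPart s}
    have hbc : ∀ v : Io → Bool, ∃ χ : Formula Sg, χ.inPart sp (sp.sortPart s) ∧
        ∀ (B : Structure Sg) (ν : Assign B), Sat B ν χ ↔
          F (fun i => if hp : pt i = sp.sortPart s then Sat B ν (θ i)
            else v ⟨i, hp⟩ = true) :=
      fun v => exists_bc sp (sp.sortPart s) (fun i : Il => θ i.1)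
        (fun i => by have h2 := hpt i.1; rwa [i.2] at h2)
        (fun h => F (fun i => if hp : pt i = sp.sortPart s then h ⟨i, hp⟩
          else v ⟨i, hp⟩ = true))
    choose χv hχ1 hχ2 using hbc
    have key : ∀ (ν : Assign A) (a : A.dom s) (v : Io → Bool),
        (∀ i : Io, (Sat A ν (θ i.1) ↔ v i = true)) →
        ((fun i => if hp : pt i = sp.sortPart s then Sat A (ν.update s m a) (θ i)
          else v ⟨i, hp⟩ = true) = fun i => Sat A (ν.update s m a) (θ i)) := by
      intro ν a v hv
      funext i
      by_cases hp : pt i = sp.sortPart s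
      · simp [hp]
      · simp only [dif_neg hp]
        apply propext
        rw [← hv ⟨i, hp⟩]
        exact (sat_update_of_ne_part sp (hpt i) (fun hc => hp hc.symm) ν m a).symm
    refine ⟨Io ⊕ (Io → Bool), inferInstance,
      Sum.elim (fun i => θ i.1) (fun v => .all s m (χv v)),
      Sum.elim (fun i => pt i.1) (fun _ => sp.sortPart s),
      fun g => ∃ v : Io → Bool, (∀ i : Io, g (.inl i) ↔ v i = true) ∧ g (.inr v), ?_, ?_⟩
    · rintro (i | v)
      · exact hpt i.1
      · exact ⟨rfl, hχ1 v⟩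
    · intro ν
      show (∀ a, Sat A (ν.update s m a) ψ) ↔ _
      constructor
      · intro h
        refine ⟨fun i => decide (Sat A ν (θ i.1)), fun i => by simp, ?_⟩
        show ∀ a, Sat A (ν.update s m a) (χv _)
        intro a
        rw [hχ2, key ν a (fun i : Io => decide (Sat A ν (θ i.1))) (fun i => by simp)]
        exact (hF (ν.update s m a)).1 (h a)
      · rintro ⟨v, hv, hall⟩ a
        have := hχ2 v A (ν.update s m a) |>.1 (hall a)
        rw [key ν a v hv] at this
        exact (hF (ν.update s m a)).2 this

/-- Reduction: the dependence of any formula on a single variable of sort `s` is captured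
by a formula in the part of `s`. -/
theorem reduce (sp : Split Sg Λ) (A : Structure Sg) (ψ : Formula Sg) (s : Sg.Sorts)
    (n : ℕ) (ν : Assign A) :
    ∃ θ : Formula Sg, θ.inPart sp (sp.sortPart s) ∧
      ∀ a : A.dom s, (Sat A (ν.update s n a) ψ ↔ Sat A (ν.update s n a) θ) := by
  classical
  obtain ⟨ι, fι, θ, pt, F, hpt, hF⟩ := normal_form sp A ψ
  let Il := {i : ι // pt i = sp.sortPart s}
  obtain ⟨χ, hχ1, hχ2⟩ := exists_bc sp (sp.sortPart s) (fun i : Il => θ i.1)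
    (fun i => by have h2 := hpt i.1; rwa [i.2] at h2)
    (fun h => F (fun i => if hp : pt i = sp.sortPart s then h ⟨i, hp⟩
      else Sat A ν (θ i)))
  refine ⟨χ, hχ1, fun a => ?_⟩
  rw [hF, hχ2 A (ν.update s n a)]
  have : (fun i => if hp : pt i = sp.sortPart s then Sat A (ν.update s n a) (θ i)
      else Sat A ν (θ i)) = fun i => Sat A (ν.update s n a) (θ i) := by
    funext i
    by_cases hp : pt i = sp.sortPart s
    · simp [hp]
    · simp only [dif_neg hp]
      exact propext (sat_update_of_ne_part sp (hpt i) (fun hc => hp hc.symm) ν n a).symm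
  rw [this]

end NF

end MS
namespace MS

open Cardinal FirstOrder

variable {Sg : MSSignature} {Λ : Type}

section Count

variable (sp : Split Sg Λ) (l : Λ)

/-- Auxiliary single-sorted language whose terms encode part-`l` terms. -/
def termLang : Language :=
  ⟨fun n => {f : Sg.Func // sp.funcPart f = l ∧ (Sg.funcDom f).length = n}, fun _ => Empty⟩

abbrev TVar := ({s : Sg.Sorts // sp.sortPart s = l} × ℕ)

def encT : ∀ {s : Sg.Sorts} (t : Term Sg s), t.inPart sp l → (termLang sp l).Term (TVar sp l)
  | _, .var s n, h => .var (⟨s, h⟩, n)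
  | _, .app f args, h => .func (⟨f, h.1, rfl⟩ : (termLang sp l).Functions (Sg.funcDom f).length)
      (fun i => encT (args i) (h.2 i))

def topSym : (termLang sp l).Term (TVar sp l) → Option Sg.Func
  | .var _ => none
  | .func f _ => some f.1

lemma encT_inj : ∀ {s : Sg.Sorts} (t : Term Sg s) (h : t.inPart sp l) {s' : Sg.Sorts}
    (t' : Term Sg s') (h' : t'.inPart sp l), encT sp l t h = encT sp l t' h' →
    s = s' ∧ HEq t t'
  | _, .var s n, h, _, .var s' n', h', e => by
    simp only [encT] at e
    injection e with e1
    obtain ⟨rfl, rfl⟩ : s = s' ∧ n = n' := by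
      refine ⟨congrArg (fun p => p.1.1) e1, congrArg Prod.snd e1⟩
    exact ⟨rfl, HEq.rfl⟩
  | _, .var s n, h, _, .app g brgs, h', e => by simp [encT] at e
  | _, .app f args, h, _, .var s' n', h', e => by simp [encT] at e
  | _, .app f args, h, _, .app g brgs, h', e => by
    have hfg : f = g := by
      have h2 := congrArg (topSym sp l) e
      simpa [encT, topSym] using h2
    subst hfg
    simp only [encT] at e
    injection e with hn hf hts
    have hts' : (fun i => encT sp l (args i) (h.2 i)) =
        fun i => encT sp l (brgs i) (h'.2 i) := hts
    have hargs : args = brgs := by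
      funext i
      exact eq_of_heq (encT_inj (args i) (h.2 i) (brgs i) (h'.2 i) (congrFun hts' i)).2
    subst hargs
    exact ⟨rfl, HEq.rfl⟩

/-- Sorted part-`l` terms. -/
abbrev PartTerm : Type := Σ s : {s : Sg.Sorts // sp.sortPart s = l}, {t : Term Sg s.1 // t.inPart sp l}

lemma mk_partTerm_le : #(PartTerm sp l) ≤ max ℵ₀ (sp.partCard l) := by
  have hinj : Function.Injective (fun p : PartTerm sp l => encT sp l p.2.1 p.2.2) := by
    rintro ⟨⟨s, hs⟩, t, ht⟩ ⟨⟨s', hs'⟩, t', ht'⟩ e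
    obtain ⟨h1, h2⟩ := encT_inj sp l t ht t' ht' e
    subst h1
    obtain rfl := eq_of_heq h2
    rfl
  refine (mk_le_of_injective hinj).trans ?_
  refine (FirstOrder.Language.Term.card_le).trans ?_
  set C := max ℵ₀ (sp.partCard l) with hC
  have hC0 : ℵ₀ ≤ C := le_max_left _ _
  have hS : #{s : Sg.Sorts // sp.sortPart s = l} ≤ C := by
    refine le_trans ?_ (le_max_right _ _)
    unfold Split.partCard
    exact le_add_right (le_add_right (le_refl _))
  have hF : #{f : Sg.Func // sp.funcPart f = l} ≤ C := by
    refine le_trans ?_ (le_max_right _ _)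
    unfold Split.partCard
    exact le_add_right (le_add_left (le_refl _))
  have hfin : #(Σ n, (termLang sp l).Functions n) ≤ C := by
    refine le_trans (mk_le_of_injective (f := fun x : Σ n, (termLang sp l).Functions n =>
      (⟨x.2.1, x.2.2.1⟩ : {f : Sg.Func // sp.funcPart f = l})) ?_) hF
    rintro ⟨n, f, hf, rfl⟩ ⟨n', f', hf', rfl⟩ hEq
    simp only [Subtype.mk.injEq] at hEq
    subst hEq
    rfl
  have hvar : #(TVar sp l) ≤ C := by
    have : #(TVar sp l) = #{s : Sg.Sorts // sp.sortPart s = l} * ℵ₀ := by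
      simp [TVar, Cardinal.mk_prod]
    rw [this]
    calc #{s : Sg.Sorts // sp.sortPart s = l} * ℵ₀ ≤ C * C := mul_le_mul' hS hC0
    _ = C := mul_eq_self hC0
  refine max_le hC0 ?_
  rw [Cardinal.mk_sum]
  simp only [Cardinal.lift_id]
  calc #(TVar sp l) + #(Σ n, (termLang sp l).Functions n) ≤ C + C := add_le_add hvar hfin
  _ = C := add_eq_self hC0

/-- Symbols for the formula-encoding language. -/
abbrev FSym : Type :=
  {s : Sg.Sorts // sp.sortPart s = l} ⊕ {P : Sg.Pred // sp.predPart P = l} ⊕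
    Unit ⊕ Unit ⊕ ({s : Sg.Sorts // sp.sortPart s = l} × ℕ)

def farity : FSym sp l → ℕ
  | .inl _ => 2
  | .inr (.inl P) => (Sg.predDom P.1).length
  | .inr (.inr (.inl _)) => 0
  | .inr (.inr (.inr (.inl _))) => 2
  | .inr (.inr (.inr (.inr _))) => 1

def formLang : Language :=
  ⟨fun n => {x : FSym sp l // farity sp l x = n}, fun _ => Empty⟩

def encF : (φ : Formula Sg) → φ.inPart sp l → (formLang sp l).Term (PartTerm sp l)
  | .eq (s := s) t u, h =>
    .func (⟨.inl ⟨s, h.1⟩, rfl⟩ : (formLang sp l).Functions 2)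
      ![.var ⟨⟨s, h.1⟩, t, h.2.1⟩, .var ⟨⟨s, h.1⟩, u, h.2.2⟩]
  | .pred P args, h =>
    .func (⟨.inr (.inl ⟨P, h.1⟩), rfl⟩ : (formLang sp l).Functions (Sg.predDom P).length)
      (fun i => .var ⟨⟨(Sg.predDom P).get i, by rw [sp.pred_dom]; exact h.1⟩, args i, h.2 i⟩)
  | .falsum, _ => .func (⟨.inr (.inr (.inl ())), rfl⟩ : (formLang sp l).Functions 0) Fin.elim0
  | .imp φ ψ, h =>
    .func (⟨.inr (.inr (.inr (.inl ()))), rfl⟩ : (formLang sp l).Functions 2)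
      ![encF φ h.1, encF ψ h.2]
  | .all s n φ, h =>
    .func (⟨.inr (.inr (.inr (.inr (⟨s, h.1⟩, n)))), rfl⟩ : (formLang sp l).Functions 1)
      ![encF φ h.2]

def topSymF : (formLang sp l).Term (PartTerm sp l) → Option (FSym sp l)
  | .var _ => none
  | .func f _ => some f.1

lemma encF_inj : ∀ (φ : Formula Sg) (h : φ.inPart sp l) (φ' : Formula Sg)
    (h' : φ'.inPart sp l), encF sp l φ h = encF sp l φ' h' → φ = φ' := by
  intro φ
  induction φ with
  | @eq s t u =>
    intro h φ' h' e
    cases φ' with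
    | @eq s' t' u' =>
      obtain rfl : s = s' := by
        have h2 := congrArg (topSymF sp l) e
        simpa [encF, topSymF] using h2
      simp only [encF] at e
      injection e with hn hf hts
      have h0 := congrFun hts 0
      have h1 := congrFun hts 1
      simp only [Matrix.cons_val_zero, Matrix.cons_val_one, Matrix.head_cons] at h0 h1
      injection h0 with h0'
      injection h1 with h1'
      simp at h0' h1'
      subst h0'
      subst h1'
      rfl
    | pred P' args' =>
      have h2 := congrArg (topSymF sp l) e; simp [encF, topSymF] at h2
    | falsum => have h2 := congrArg (topSymF sp l) e; simp [encF, topSymF] at h2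
    | imp φ₁ φ₂ => have h2 := congrArg (topSymF sp l) e; simp [encF, topSymF] at h2
    | all s' n' φ₁ => have h2 := congrArg (topSymF sp l) e; simp [encF, topSymF] at h2
  | pred P args =>
    intro h φ' h' e
    cases φ' with
    | @eq s' t' u' => have h2 := congrArg (topSymF sp l) e; simp [encF, topSymF] at h2
    | pred P' args' =>
      obtain rfl : P = P' := by
        have h2 := congrArg (topSymF sp l) e
        simpa [encF, topSymF] using h2
      simp only [encF] at e
      injection e with hn hf hts
      have hargs : args = args' := by
        funext i
        have h0 := congrFun hts i
        injection h0 with h0'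
        simp at h0'
        exact h0'
      subst hargs
      rfl
    | falsum => have h2 := congrArg (topSymF sp l) e; simp [encF, topSymF] at h2
    | imp φ₁ φ₂ => have h2 := congrArg (topSymF sp l) e; simp [encF, topSymF] at h2
    | all s' n' φ₁ => have h2 := congrArg (topSymF sp l) e; simp [encF, topSymF] at h2
  | falsum =>
    intro h φ' h' e
    cases φ' with
    | @eq s' t' u' => have h2 := congrArg (topSymF sp l) e; simp [encF, topSymF] at h2
    | pred P' args' => have h2 := congrArg (topSymF sp l) e; simp [encF, topSymF] at h2
    | falsum => rfl
    | imp φ₁ φ₂ => have h2 := congrArg (topSymF sp l) e; simp [encF, topSymF] at h2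
    | all s' n' φ₁ => have h2 := congrArg (topSymF sp l) e; simp [encF, topSymF] at h2
  | imp φ₁ φ₂ ih1 ih2 =>
    intro h φ' h' e
    cases φ' with
    | @eq s' t' u' => have h2 := congrArg (topSymF sp l) e; simp [encF, topSymF] at h2
    | pred P' args' => have h2 := congrArg (topSymF sp l) e; simp [encF, topSymF] at h2
    | falsum => have h2 := congrArg (topSymF sp l) e; simp [encF, topSymF] at h2
    | imp ψ₁ ψ₂ =>
      simp only [encF] at e
      injection e with hn hf hts
      have h0 := congrFun hts 0
      have h1 := congrFun hts 1
      simp only [Matrix.cons_val_zero, Matrix.cons_val_one, Matrix.head_cons] at h0 h1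
      rw [ih1 h.1 ψ₁ h'.1 h0, ih2 h.2 ψ₂ h'.2 h1]
    | all s' n' φ₁ => have h2 := congrArg (topSymF sp l) e; simp [encF, topSymF] at h2
  | all s n φ₁ ih =>
    intro h φ' h' e
    cases φ' with
    | @eq s' t' u' => have h2 := congrArg (topSymF sp l) e; simp [encF, topSymF] at h2
    | pred P' args' => have h2 := congrArg (topSymF sp l) e; simp [encF, topSymF] at h2
    | falsum => have h2 := congrArg (topSymF sp l) e; simp [encF, topSymF] at h2
    | imp φ₁' φ₂' => have h2 := congrArg (topSymF sp l) e; simp [encF, topSymF] at h2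
    | all s' n' ψ =>
      obtain ⟨rfl, rfl⟩ : s = s' ∧ n = n' := by
        have h2 := congrArg (topSymF sp l) e
        simp [encF, topSymF] at h2
        exact ⟨h2.1, h2.2⟩
      simp only [encF] at e
      injection e with hn hf hts
      have h0 := congrFun hts 0
      simp only [Matrix.cons_val_zero] at h0
      rw [ih h.2 ψ h'.2 h0]

theorem mk_inPart_le : #{φ : Formula Sg // φ.inPart sp l} ≤ max ℵ₀ (sp.partCard l) := by
  have hinj : Function.Injective
      (fun p : {φ : Formula Sg // φ.inPart sp l} => encF sp l p.1 p.2) := by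
    rintro ⟨φ, h⟩ ⟨φ', h'⟩ e
    exact Subtype.ext (encF_inj sp l φ h φ' h' e)
  refine (mk_le_of_injective hinj).trans ?_
  refine (FirstOrder.Language.Term.card_le).trans ?_
  set C := max ℵ₀ (sp.partCard l) with hC
  have hC0 : ℵ₀ ≤ C := le_max_left _ _
  have hS : #{s : Sg.Sorts // sp.sortPart s = l} ≤ C := by
    refine le_trans ?_ (le_max_right _ _)
    unfold Split.partCard
    exact le_add_right (le_add_right (le_refl _))
  have hP : #{P : Sg.Pred // sp.predPart P = l} ≤ C := by
    refine le_trans ?_ (le_max_right _ _)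
    unfold Split.partCard
    exact le_add_left (le_refl _)
  have hsym : #(FSym sp l) ≤ C := by
    unfold FSym
    rw [Cardinal.mk_sum, Cardinal.mk_sum, Cardinal.mk_sum, Cardinal.mk_sum]
    simp only [Cardinal.lift_id, Cardinal.mk_punit, Cardinal.mk_prod, Cardinal.mk_nat]
    have h1 : (1 : Cardinal) ≤ C := le_trans one_le_aleph0 hC0
    have hSN : #{s : Sg.Sorts // sp.sortPart s = l} * ℵ₀ ≤ C :=
      le_trans (mul_le_mul' hS hC0) (le_of_eq (mul_eq_self hC0))
    calc #{s : Sg.Sorts // sp.sortPart s = l} + (#{P : Sg.Pred // sp.predPart P = l} +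
          (1 + (1 + #{s : Sg.Sorts // sp.sortPart s = l} * ℵ₀)))
        ≤ C + (C + (C + (C + C))) := by
          refine add_le_add hS (add_le_add hP (add_le_add h1 (add_le_add h1 hSN)))
      _ = C := by
          rw [add_eq_self hC0, add_eq_self hC0, add_eq_self hC0, add_eq_self hC0]
  have hfin : #(Σ n, (formLang sp l).Functions n) ≤ C := by
    refine le_trans (mk_le_of_injective (f := fun x : Σ n, (formLang sp l).Functions n =>
      x.2.1) ?_) hsym
    rintro ⟨n, x, rfl⟩ ⟨n', x', rfl⟩ hEq
    simp only at hEq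
    subst hEq
    rfl
  refine max_le hC0 ?_
  rw [Cardinal.mk_sum]
  simp only [Cardinal.lift_id]
  calc #(PartTerm sp l) + #(Σ n, (formLang sp l).Functions n) ≤ C + C :=
        add_le_add (mk_partTerm_le sp l) hfin
    _ = C := add_eq_self hC0

end Count

end MS
namespace MS

open Cardinal

variable {Sg : MSSignature} {Λ : Type}

section Construct

variable (sp : Split Sg Λ) (A : Structure Sg)

noncomputable def defAssign : Assign A := fun s _ => Classical.choice (A.dom_nonempty s)

open Classical in
noncomputable def flat (φ : Formula Sg) (ν : Assign A) : Assign A :=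
  fun t m => if φ.varFree t m then ν t m else defAssign A t m

open Classical in
noncomputable def W (φ : Formula Sg) (s : Sg.Sorts) (n : ℕ) (ν : Assign A) : A.dom s :=
  if h : ∃ a, Sat A ((flat A φ ν).update s n a) φ then h.choose
  else Classical.choice (A.dom_nonempty s)

lemma flat_flat (φ : Formula Sg) (ν : Assign A) : flat A φ (flat A φ ν) = flat A φ ν := by
  funext t m
  unfold flat
  split <;> simp_all [flat]

lemma flat_update_sat (φ : Formula Sg) (ν : Assign A) (s : Sg.Sorts) (n : ℕ) (a : A.dom s) :
    Sat A ((flat A φ ν).update s n a) φ ↔ Sat A (ν.update s n a) φ := by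
  refine Sat_congr φ fun u k hk => ?_
  by_cases hc : s = u ∧ n = k
  · obtain ⟨rfl, rfl⟩ := hc
    rw [Assign.update_self, Assign.update_self]
  · rw [Assign.update_of_ne _ _ hc, Assign.update_of_ne _ _ hc]
    simp [flat, hk]

lemma W_sat (φ : Formula Sg) (s : Sg.Sorts) (n : ℕ) (ν : Assign A)
    (h : ∃ a, Sat A (ν.update s n a) φ) : Sat A (ν.update s n (W A φ s n ν)) φ := by
  rw [← flat_update_sat]
  unfold W
  obtain ⟨a, ha⟩ := h
  have h' : ∃ a, Sat A ((flat A φ ν).update s n a) φ := ⟨a, (flat_update_sat A φ ν s n a).2 ha⟩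
  rw [dif_pos h']
  exact h'.choose_spec

lemma W_flat (φ : Formula Sg) (s : Sg.Sorts) (n : ℕ) (ν : Assign A) :
    W A φ s n ν = W A φ s n (flat A φ ν) := by
  unfold W
  rw [flat_flat]

variable (S0 : ∀ s : Sg.Sorts, Set (A.dom s))

def nextStage (D : ∀ s : Sg.Sorts, Set (A.dom s)) : ∀ s : Sg.Sorts, Set (A.dom s) := fun s =>
  D s ∪
  ({a | ∃ (f : Sg.Func) (h : Sg.funcCod f = s)
      (args : ∀ i : Fin (Sg.funcDom f).length, A.dom ((Sg.funcDom f).get i)),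
      (∀ i, args i ∈ D _) ∧ a = h ▸ A.interpFunc f args} ∪
   {a | ∃ φ : Formula Sg, φ.inPart sp (sp.sortPart s) ∧ ∃ (n : ℕ) (ν : Assign A),
      (∀ t m, φ.varFree t m → ν t m ∈ D t) ∧
      (∀ t m, ¬ φ.varFree t m → ν t m = defAssign A t m) ∧
      a = W A φ s n ν})

noncomputable def stage : ℕ → ∀ s : Sg.Sorts, Set (A.dom s)
  | 0 => S0
  | k+1 => nextStage sp A (stage k)

lemma stage_succ_subset (k : ℕ) (s : Sg.Sorts) :
    stage sp A S0 k s ⊆ stage sp A S0 (k+1) s := Set.subset_union_left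

lemma stage_mono {k k' : ℕ} (h : k ≤ k') (s : Sg.Sorts) :
    stage sp A S0 k s ⊆ stage sp A S0 k' s := by
  induction k' with
  | zero => rw [Nat.le_zero.1 h]
  | succ k' ih =>
    rcases Nat.lt_or_ge k (k'+1) with hlt | hge
    · exact (ih (Nat.lt_succ_iff.1 hlt)).trans (stage_succ_subset sp A S0 k' s)
    · rw [Nat.le_antisymm h hge]

noncomputable def carrier (s : Sg.Sorts) : Set (A.dom s) := ⋃ k, stage sp A S0 k s

lemma stage_subset_carrier (k : ℕ) (s : Sg.Sorts) :
    stage sp A S0 k s ⊆ carrier sp A S0 s := Set.subset_iUnion (fun k => stage sp A S0 k s) k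

lemma carrier_closed (f : Sg.Func)
    (args : ∀ i : Fin (Sg.funcDom f).length, A.dom ((Sg.funcDom f).get i))
    (hargs : ∀ i, args i ∈ carrier sp A S0 _) :
    A.interpFunc f args ∈ carrier sp A S0 _ := by
  classical
  have hex : ∀ i, ∃ k, args i ∈ stage sp A S0 k _ := by
    intro i
    exact Set.mem_iUnion.1 (hargs i)
  choose g hg using hex
  set k := Finset.univ.sup g with hk
  have hks : ∀ i, args i ∈ stage sp A S0 k _ := fun i =>
    stage_mono sp A S0 (Finset.le_sup (Finset.mem_univ i)) _ (hg i)
  refine stage_subset_carrier sp A S0 (k+1) _ ?_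
  refine Or.inr (Or.inl ?_)
  exact ⟨f, rfl, args, hks, rfl⟩

lemma carrier_witness (s : Sg.Sorts) (φ : Formula Sg) (hφ : φ.inPart sp (sp.sortPart s))
    (n : ℕ) (ν : Assign A) (hν : ∀ t m, ν t m ∈ carrier sp A S0 t)
    (h : ∃ a, Sat A (ν.update s n a) φ) :
    ∃ b ∈ carrier sp A S0 s, Sat A (ν.update s n b) φ := by
  classical
  refine ⟨W A φ s n ν, ?_, W_sat A φ s n ν h⟩
  rw [W_flat]
  set g : Sg.Sorts × ℕ → ℕ := fun p =>
    if hp : φ.varFree p.1 p.2 then (Set.mem_iUnion.1 (hν p.1 p.2)).choose else 0 with hgdef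
  set k := (φ.finite_freeSet.toFinset).sup g with hk
  have hfree : ∀ t m, φ.varFree t m → flat A φ ν t m ∈ stage sp A S0 k t := by
    intro t m hf
    have h1 : flat A φ ν t m = ν t m := by simp [flat, hf]
    rw [h1]
    have h2 : ν t m ∈ stage sp A S0 (g (t, m)) t := by
      rw [hgdef]
      simp only [hf, dif_pos]
      exact (Set.mem_iUnion.1 (hν t m)).choose_spec
    refine stage_mono sp A S0 ?_ t h2
    exact Finset.le_sup (by simp [Set.Finite.mem_toFinset, Formula.freeSet]; exact hf)
  refine stage_subset_carrier sp A S0 (k+1) s ?_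
  refine Or.inr (Or.inr ?_)
  exact ⟨φ, hφ, n, flat A φ ν, hfree, fun t m hf => by simp [flat, hf], rfl⟩

end Construct

end MS
namespace MS

open Cardinal

variable {Sg : MSSignature} {Λ : Type}

section Card

variable (sp : Split Sg Λ) (A : Structure Sg) (S0 : ∀ s : Sg.Sorts, Set (A.dom s))
  (κ : Λ → Cardinal)

lemma mk_nextStage_le (hlow : ∀ l, max ℵ₀ (sp.partCard l) ≤ κ l)
    (D : ∀ s : Sg.Sorts, Set (A.dom s)) (hD : ∀ t, #(D t) ≤ κ (sp.sortPart t))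
    (s : Sg.Sorts) : #(nextStage sp A D s) ≤ κ (sp.sortPart s) := by
  classical
  have hℵ : ∀ l, ℵ₀ ≤ κ l := fun l => le_trans (le_max_left _ _) (hlow l)
  have hpart : ∀ l, sp.partCard l ≤ κ l := fun l => le_trans (le_max_right _ _) (hlow l)
  -- bound for the function-image part
  have hSf : #({a : A.dom s | ∃ (f : Sg.Func) (h : Sg.funcCod f = s)
      (args : ∀ i : Fin (Sg.funcDom f).length, A.dom ((Sg.funcDom f).get i)),
      (∀ i, args i ∈ D _) ∧ a = h ▸ A.interpFunc f args}) ≤ κ (sp.sortPart s) := by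
    set T := Σ f : {f : Sg.Func // Sg.funcCod f = s},
      ∀ i : Fin (Sg.funcDom f.1).length, ↥(D ((Sg.funcDom f.1).get i)) with hT
    set g : T → A.dom s := fun x => x.1.2 ▸ A.interpFunc x.1.1 (fun i => (x.2 i).1) with hg
    have hsub : {a : A.dom s | ∃ (f : Sg.Func) (h : Sg.funcCod f = s)
        (args : ∀ i : Fin (Sg.funcDom f).length, A.dom ((Sg.funcDom f).get i)),
        (∀ i, args i ∈ D _) ∧ a = h ▸ A.interpFunc f args} ⊆ Set.range g := by
      rintro a ⟨f, h, args, hargs, rfl⟩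
      exact ⟨⟨⟨f, h⟩, fun i => ⟨args i, hargs i⟩⟩, rfl⟩
    refine le_trans (mk_le_mk_of_subset hsub) (le_trans mk_range_le ?_)
    rw [hT, Cardinal.mk_sigma]
    have hone : ∀ f : {f : Sg.Func // Sg.funcCod f = s},
        #(∀ i : Fin (Sg.funcDom f.1).length, ↥(D ((Sg.funcDom f.1).get i))) ≤
          κ (sp.sortPart s) := by
      intro f
      rw [Cardinal.mk_pi]
      have hfact : ∀ i, #(↥(D ((Sg.funcDom f.1).get i))) ≤ κ (sp.sortPart s) := by
        intro i
        have h1 := hD ((Sg.funcDom f.1).get i)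
        have h2 : sp.sortPart ((Sg.funcDom f.1).get i) = sp.sortPart s := by
          rw [sp.func_dom f.1 i, ← sp.func_cod f.1, f.2]
        rwa [h2] at h1
      refine le_trans (Cardinal.prod_le_prod _ (fun _ => κ (sp.sortPart s)) hfact) ?_
      rw [Cardinal.prod_const', Cardinal.mk_fin]
      exact Cardinal.pow_le (hℵ _) (Cardinal.nat_lt_aleph0 _)
    refine le_trans (Cardinal.sum_le_sum _ _ hone) ?_
    rw [Cardinal.sum_const']
    have hfcard : #{f : Sg.Func // Sg.funcCod f = s} ≤ κ (sp.sortPart s) := by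
      refine le_trans (Cardinal.mk_le_of_injective
        (f := fun x : {f : Sg.Func // Sg.funcCod f = s} =>
          (⟨x.1, by rw [← sp.func_cod, x.2]⟩ :
            {f : Sg.Func // sp.funcPart f = sp.sortPart s})) ?_) ?_
      · intro x y hxy
        simp only [Subtype.mk.injEq] at hxy
        exact Subtype.ext hxy
      · refine le_trans ?_ (hpart (sp.sortPart s))
        unfold Split.partCard
        exact le_add_right (le_add_left (le_refl _))
    calc #{f : Sg.Func // Sg.funcCod f = s} * κ (sp.sortPart s)
        ≤ κ (sp.sortPart s) * κ (sp.sortPart s) := mul_le_mul' hfcard (le_refl _)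
      _ = κ (sp.sortPart s) := mul_eq_self (hℵ _)
  -- bound for the witness part
  have hSw : #({a : A.dom s | ∃ φ : Formula Sg, φ.inPart sp (sp.sortPart s) ∧
      ∃ (n : ℕ) (ν : Assign A), (∀ t m, φ.varFree t m → ν t m ∈ D t) ∧
      (∀ t m, ¬ φ.varFree t m → ν t m = defAssign A t m) ∧
      a = W A φ s n ν}) ≤ κ (sp.sortPart s) := by
    set U := Σ φ : {φ : Formula Sg // φ.inPart sp (sp.sortPart s)},
      ℕ × {ν : Assign A // (∀ t m, φ.1.varFree t m → ν t m ∈ D t) ∧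
        (∀ t m, ¬ φ.1.varFree t m → ν t m = defAssign A t m)} with hU
    set g : U → A.dom s := fun x => W A x.1.1 s x.2.1 x.2.2.1 with hg
    have hsub : {a : A.dom s | ∃ φ : Formula Sg, φ.inPart sp (sp.sortPart s) ∧
        ∃ (n : ℕ) (ν : Assign A), (∀ t m, φ.varFree t m → ν t m ∈ D t) ∧
        (∀ t m, ¬ φ.varFree t m → ν t m = defAssign A t m) ∧
        a = W A φ s n ν} ⊆ Set.range g := by
      rintro a ⟨φ, hφ, n, ν, h1, h2, rfl⟩
      exact ⟨⟨⟨φ, hφ⟩, n, ⟨ν, h1, h2⟩⟩, rfl⟩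
    refine le_trans (mk_le_mk_of_subset hsub) (le_trans mk_range_le ?_)
    rw [hU, Cardinal.mk_sigma]
    have hone : ∀ φ : {φ : Formula Sg // φ.inPart sp (sp.sortPart s)},
        #(ℕ × {ν : Assign A // (∀ t m, φ.1.varFree t m → ν t m ∈ D t) ∧
          (∀ t m, ¬ φ.1.varFree t m → ν t m = defAssign A t m)}) ≤ κ (sp.sortPart s) := by
      intro φ
      have hν : #{ν : Assign A // (∀ t m, φ.1.varFree t m → ν t m ∈ D t) ∧
          (∀ t m, ¬ φ.1.varFree t m → ν t m = defAssign A t m)} ≤ κ (sp.sortPart s) := by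
        haveI : Finite ↥(φ.1.freeSet) := (φ.1.finite_freeSet).to_subtype
        refine le_trans (Cardinal.mk_le_of_injective
          (f := fun x : {ν : Assign A // (∀ t m, φ.1.varFree t m → ν t m ∈ D t) ∧
            (∀ t m, ¬ φ.1.varFree t m → ν t m = defAssign A t m)} =>
            (fun p : ↥(φ.1.freeSet) => (⟨x.1 p.1.1 p.1.2, x.2.1 p.1.1 p.1.2 p.2⟩ :
              ↥(D p.1.1)))) ?_) ?_
        · intro x y hxy
          apply Subtype.ext
          funext t m
          by_cases hf : φ.1.varFree t m
          · exact congrArg Subtype.val (congrFun hxy ⟨(t, m), hf⟩)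
          · rw [x.2.2 t m hf, y.2.2 t m hf]
        · rw [Cardinal.mk_pi]
          have hfact : ∀ p : ↥(φ.1.freeSet), #(↥(D p.1.1)) ≤ κ (sp.sortPart s) := by
            intro p
            have h1 := hD p.1.1
            have h2 : sp.sortPart p.1.1 = sp.sortPart s :=
              Formula.sortPart_of_varFree sp φ.1 φ.2 p.2
            rwa [h2] at h1
          refine le_trans (Cardinal.prod_le_prod _ (fun _ => κ (sp.sortPart s)) hfact) ?_
          rw [Cardinal.prod_const']
          exact Cardinal.pow_le (hℵ _) (Cardinal.lt_aleph0_of_finite _)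
      rw [Cardinal.mk_prod]
      simp only [Cardinal.lift_id, Cardinal.mk_nat]
      calc ℵ₀ * #{ν : Assign A // (∀ t m, φ.1.varFree t m → ν t m ∈ D t) ∧
            (∀ t m, ¬ φ.1.varFree t m → ν t m = defAssign A t m)}
          ≤ κ (sp.sortPart s) * κ (sp.sortPart s) := mul_le_mul' (hℵ _) hν
        _ = κ (sp.sortPart s) := mul_eq_self (hℵ _)
    refine le_trans (Cardinal.sum_le_sum _ _ hone) ?_
    rw [Cardinal.sum_const']
    have hφcard : #{φ : Formula Sg // φ.inPart sp (sp.sortPart s)} ≤ κ (sp.sortPart s) :=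
      le_trans (mk_inPart_le sp (sp.sortPart s)) (hlow _)
    calc #{φ : Formula Sg // φ.inPart sp (sp.sortPart s)} * κ (sp.sortPart s)
        ≤ κ (sp.sortPart s) * κ (sp.sortPart s) := mul_le_mul' hφcard (le_refl _)
      _ = κ (sp.sortPart s) := mul_eq_self (hℵ _)
  calc #(nextStage sp A D s)
      ≤ #(D s) + #(({a : A.dom s | ∃ (f : Sg.Func) (h : Sg.funcCod f = s)
          (args : ∀ i : Fin (Sg.funcDom f).length, A.dom ((Sg.funcDom f).get i)),
          (∀ i, args i ∈ D _) ∧ a = h ▸ A.interpFunc f args} ∪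
        {a : A.dom s | ∃ φ : Formula Sg, φ.inPart sp (sp.sortPart s) ∧
          ∃ (n : ℕ) (ν : Assign A), (∀ t m, φ.varFree t m → ν t m ∈ D t) ∧
          (∀ t m, ¬ φ.varFree t m → ν t m = defAssign A t m) ∧
          a = W A φ s n ν} : Set (A.dom s))) := Cardinal.mk_union_le _ _
    _ ≤ #(D s) + (#({a : A.dom s | ∃ (f : Sg.Func) (h : Sg.funcCod f = s)
          (args : ∀ i : Fin (Sg.funcDom f).length, A.dom ((Sg.funcDom f).get i)),
          (∀ i, args i ∈ D _) ∧ a = h ▸ A.interpFunc f args}) +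
        #({a : A.dom s | ∃ φ : Formula Sg, φ.inPart sp (sp.sortPart s) ∧
          ∃ (n : ℕ) (ν : Assign A), (∀ t m, φ.varFree t m → ν t m ∈ D t) ∧
          (∀ t m, ¬ φ.varFree t m → ν t m = defAssign A t m) ∧
          a = W A φ s n ν})) := by
        exact add_le_add (le_refl _) (Cardinal.mk_union_le _ _)
    _ ≤ κ (sp.sortPart s) + (κ (sp.sortPart s) + κ (sp.sortPart s)) :=
        add_le_add (hD s) (add_le_add hSf hSw)
    _ = κ (sp.sortPart s) := by rw [add_eq_self (hℵ _), add_eq_self (hℵ _)]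

lemma mk_stage_le (hlow : ∀ l, max ℵ₀ (sp.partCard l) ≤ κ l)
    (hS0 : ∀ s, #(S0 s) ≤ κ (sp.sortPart s)) :
    ∀ (k : ℕ) (s : Sg.Sorts), #(stage sp A S0 k s) ≤ κ (sp.sortPart s) := by
  intro k
  induction k with
  | zero => exact hS0
  | succ k ih => exact fun s => mk_nextStage_le sp A κ hlow (stage sp A S0 k) ih s

lemma mk_carrier_le (hlow : ∀ l, max ℵ₀ (sp.partCard l) ≤ κ l)
    (hS0 : ∀ s, #(S0 s) ≤ κ (sp.sortPart s)) (s : Sg.Sorts) :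
    #(carrier sp A S0 s) ≤ κ (sp.sortPart s) := by
  have hℵ : ∀ l, ℵ₀ ≤ κ l := fun l => le_trans (le_max_left _ _) (hlow l)
  refine le_trans (Cardinal.mk_iUnion_le _) ?_
  calc #ℕ * ⨆ k, #(stage sp A S0 k s) ≤ ℵ₀ * κ (sp.sortPart s) := by
        rw [Cardinal.mk_nat]
        exact mul_le_mul' (le_refl _) (ciSup_le' (fun k => mk_stage_le sp A S0 κ hlow hS0 k s))
    _ = κ (sp.sortPart s) := Cardinal.aleph0_mul_eq (hℵ _)

end Card

end MS
namespace MS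

open Cardinal

variable {Sg : MSSignature} {Λ : Type}

section Elem

variable {A : Structure Sg}

lemma amb_update (B : Substructure A) (ν : Assign B.toStructure) (s : Sg.Sorts) (n : ℕ)
    (b : B.toStructure.dom s) :
    B.amb (ν.update s n b) = (B.amb ν).update s n b.1 := by
  funext t m
  unfold Substructure.amb Assign.update
  split
  · rename_i h
    subst h
    split <;> rfl
  · rfl

lemma eval_amb (B : Substructure A) (ν : Assign B.toStructure) :
    ∀ {s : Sg.Sorts} (t : Term Sg s), (t.eval ν).1 = Term.eval (B.amb ν) t
  | _, .var s n => rfl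
  | _, .app f args => by
    show (A.interpFunc f fun i => ((args i).eval ν).1) = A.interpFunc f _
    congr 1
    funext i
    exact eval_amb B ν (args i)

theorem main_sat (sp : Split Sg Λ) (B : Substructure A)
    (hwit : ∀ (s : Sg.Sorts) (φ : Formula Sg), φ.inPart sp (sp.sortPart s) → ∀ (n : ℕ)
      (ν : Assign A), (∀ t m, ν t m ∈ B.carrier t) → (∃ a, Sat A (ν.update s n a) φ) →
      ∃ b ∈ B.carrier s, Sat A (ν.update s n b) φ) :
    B.IsElementary := by
  intro φ
  induction φ with
  | @eq s t u =>
    intro ν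
    show (t.eval ν = u.eval ν) ↔ (Term.eval (B.amb ν) t = Term.eval (B.amb ν) u)
    rw [← eval_amb B ν t, ← eval_amb B ν u]
    exact ⟨fun h => congrArg Subtype.val h, fun h => Subtype.ext h⟩
  | pred P args =>
    intro ν
    show A.interpPred P (fun i => ((args i).eval ν).1) ↔ A.interpPred P _
    have : (fun i => ((args i).eval ν).1) = fun i => Term.eval (B.amb ν) (args i) := by
      funext i
      exact eval_amb B ν (args i)
    rw [this]
  | falsum => exact fun ν => Iff.rfl
  | imp φ ψ ih1 ih2 =>
    intro ν
    show (Sat B.toStructure ν φ → Sat B.toStructure ν ψ) ↔ _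
    rw [ih1 ν, ih2 ν]
    exact Iff.rfl
  | all s m ψ ih =>
    intro ν
    show (∀ b : B.toStructure.dom s, Sat B.toStructure (ν.update s m b) ψ) ↔
      (∀ a : A.dom s, Sat A ((B.amb ν).update s m a) ψ)
    constructor
    · intro h a
      by_contra hc
      obtain ⟨θ, hθ1, hθ2⟩ := reduce sp A ψ s m (B.amb ν)
      have h1 : ¬ Sat A ((B.amb ν).update s m a) θ := fun hh => hc ((hθ2 a).2 hh)
      have hex : ∃ a', Sat A ((B.amb ν).update s m a') θ.not := ⟨a, (Sat_not _ _).2 h1⟩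
      obtain ⟨b, hb1, hb2⟩ := hwit s θ.not (Formula.inPart_not sp hθ1) m (B.amb ν)
        (fun t k => (ν t k).2) hex
      rw [Sat_not] at hb2
      have h3 : ¬ Sat A ((B.amb ν).update s m b) ψ := fun hh => hb2 ((hθ2 b).1 hh)
      apply h3
      have h4 := (ih (ν.update s m ⟨b, hb1⟩)).1 (h ⟨b, hb1⟩)
      exact (congrArg (fun μ => Sat A μ ψ) (amb_update B ν s m ⟨b, hb1⟩)).mp h4
    · intro h b
      rw [ih _, amb_update]
      exact h b.1

end Elem

end MS
open MS Cardinal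

/-- Downward Löwenheim–Skolem for split signatures: a different target cardinal
`κ_λ` may be chosen for each part `λ` of the splitting. -/
theorem split_downward_LS {Sg : MSSignature} {Λ : Type} (sp : Split Sg Λ)
    (A : Structure Sg) (κ : Λ → Cardinal)
    (hlow : ∀ l : Λ, max ℵ₀ (sp.partCard l) ≤ κ l)
    (hhigh : ∀ s : Sg.Sorts, Infinite (A.dom s) → κ (sp.sortPart s) ≤ #(A.dom s))
    (Asets : ∀ s : Sg.Sorts, Set (A.dom s))
    (hAsets : ∀ s : Sg.Sorts, Infinite (A.dom s) → #(Asets s) ≤ κ (sp.sortPart s)) :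
    ∃ B : Substructure A, B.IsElementary ∧
      (∀ s : Sg.Sorts, Infinite (A.dom s) →
        #(B.carrier s) = κ (sp.sortPart s) ∧ Asets s ⊆ B.carrier s) ∧
      (∀ s : Sg.Sorts, Finite (A.dom s) → B.carrier s = Set.univ) := by
  classical
  have hℵ : ∀ l, ℵ₀ ≤ κ l := fun l => le_trans (le_max_left _ _) (hlow l)
  -- choose base sets
  have hbase : ∀ s : Sg.Sorts, ∃ S : Set (A.dom s), (Asets s ⊆ S) ∧ S.Nonempty ∧
      (Infinite (A.dom s) → #S = κ (sp.sortPart s)) ∧ (Finite (A.dom s) → S = Set.univ) := by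
    intro s
    by_cases hinf : Infinite (A.dom s)
    · obtain ⟨T, hT⟩ := Cardinal.le_mk_iff_exists_set.1 (hhigh s hinf)
      have hTne : T.Nonempty := by
        rw [← Set.nonempty_coe_sort, ← Cardinal.mk_ne_zero_iff, hT]
        exact ne_of_gt (lt_of_lt_of_le Cardinal.aleph0_pos (hℵ _))
      refine ⟨Asets s ∪ T, Set.subset_union_left, hTne.mono Set.subset_union_right,
        fun _ => ?_, fun hfin => absurd hinf (not_infinite_iff_finite.2 hfin)⟩
      apply le_antisymm
      · calc #(Asets s ∪ T : Set (A.dom s)) ≤ #(Asets s) + #T := Cardinal.mk_union_le _ _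
          _ ≤ κ (sp.sortPart s) + κ (sp.sortPart s) :=
            add_le_add (hAsets s hinf) (le_of_eq hT)
          _ = κ (sp.sortPart s) := Cardinal.add_eq_self (hℵ _)
      · rw [← hT]
        exact Cardinal.mk_le_mk_of_subset Set.subset_union_right
    · rw [not_infinite_iff_finite] at hinf
      obtain ⟨x⟩ := A.dom_nonempty s
      exact ⟨Set.univ, Set.subset_univ _, ⟨x, trivial⟩,
        fun hi => absurd hi (not_infinite_iff_finite.2 hinf), fun _ => rfl⟩
  choose S0 hS0sub hS0ne hS0inf hS0fin using hbase
  have hS0card : ∀ s, #(S0 s) ≤ κ (sp.sortPart s) := by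
    intro s
    by_cases hinf : Infinite (A.dom s)
    · exact le_of_eq (hS0inf s hinf)
    · rw [not_infinite_iff_finite] at hinf
      have : Finite ↥(S0 s) := Finite.Set.subset _ (Set.subset_univ _)
      exact le_trans (le_of_lt (Cardinal.lt_aleph0_of_finite _)) (hℵ _)
  refine ⟨⟨carrier sp A S0, fun s => (hS0ne s).mono (stage_subset_carrier sp A S0 0 s),
    fun f args hargs => carrier_closed sp A S0 f args hargs⟩, ?_, ?_, ?_⟩
  · exact main_sat sp _ (fun s φ hφ n ν hν hex => carrier_witness sp A S0 s φ hφ n ν hν hex)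
  · intro s hinf
    constructor
    · apply le_antisymm
      · exact mk_carrier_le sp A S0 κ hlow hS0card s
      · rw [← hS0inf s hinf]
        exact Cardinal.mk_le_mk_of_subset (stage_subset_carrier sp A S0 0 s)
    · exact (hS0sub s).trans (stage_subset_carrier sp A S0 0 s)
  · intro s hfin
    apply Set.eq_univ_of_univ_subset
    rw [← hS0fin s hfin]
    exact stage_subset_carrier sp A S0 0 s
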